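/- arXiv:2107.05804 — 3 statements merged into one kernel-verified Lean document; each statement's English description precedes it below -/
import Mathlib

section
/- Let E be a finite-dimensional real inner product space and let L : E → ℝ be twice continuously differentiable. For a step size η > 0 and a point θ ∈ E, define the alternative training step G(η, θ) = θ' + η ∇L(θ') where θ' = θ − η ∇L(θ) (one gradient descent step followed by one gradient ascent step with the same learning rate η). Let g : E → ℝ be defined by g(θ) = ‖∇L(θ)‖². Then for each fixed θ, as η → 0 one has G(η, θ) = θ − (η²/2) ∇g(θ) + o(η²); that is, the map η ↦ (G(η, θ) − θ + (η²/2) ∇g(θ)) / η² tends to 0 as η → 0. In other words, one alternating descent–ascent step agrees, up to error o(η²), with one gradient descent step on the squared gradient norm ‖∇L‖² with learning rate η²/2. -/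
open Filter Topology InnerProductSpace

/-- One alternating descent–ascent step `G η θ = θ' + η ∇L(θ')` with
`θ' = θ - η ∇L(θ)` agrees, up to `o(η²)`, with one gradient descent step
on `g = ‖∇L‖²` with learning rate `η²/2`. -/
theorem alterSGD_step_approx_gradient_descent_on_sq_grad_norm
    {E : Type*} [NormedAddCommGroup E] [InnerProductSpace ℝ E]
    [FiniteDimensional ℝ E]
    (L : E → ℝ) (hL : ContDiff ℝ 2 L)
    (G : ℝ → E → E)
    (hG : ∀ η θ, G η θ =
      (θ - η • gradient L θ) + η • gradient L (θ - η • gradient L θ))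
    (g : E → ℝ) (hg : ∀ θ, g θ = ‖gradient L θ‖ ^ 2)
    (θ : E) :
    Tendsto (fun η : ℝ =>
        (η ^ 2)⁻¹ • (G η θ - θ + (η ^ 2 / 2) • gradient g θ))
      (𝓝[>] (0 : ℝ)) (𝓝 (0 : E)) := by
  set F : E → E := gradient L with hFdef
  set e := InnerProductSpace.toDual ℝ E with he
  have hFeq : F = fun x => e.symm (fderiv ℝ L x) := rfl
  -- F is C¹
  have hfd : ContDiff ℝ 1 (fderiv ℝ L) := hL.fderiv_right (by norm_num)
  have hFcd : ContDiff ℝ 1 F := by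
    rw [hFeq]
    exact (e.symm.toContinuousLinearEquiv.contDiff).comp hfd
  have hFdiff : DifferentiableAt ℝ F θ := (hFcd.differentiable one_ne_zero).differentiableAt
  set H := fderiv ℝ F θ with hHdef
  have hH : HasFDerivAt F H θ := hFdiff.hasFDerivAt
  -- second derivative and symmetry
  set f'' := fderiv ℝ (fderiv ℝ L) θ with hf''def
  have hfd2 : DifferentiableAt ℝ (fderiv ℝ L) θ :=
    (hfd.differentiable one_ne_zero).differentiableAt
  have hFinner : ∀ x w, ⟪F x, w⟫_ℝ = fderiv ℝ L x w := by
    intro x w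
    rw [hFeq]
    exact InnerProductSpace.toDual_symm_apply
  have hinner : ∀ v w, ⟪H v, w⟫_ℝ = f'' v w := by
    intro v w
    -- two computations of the derivative of x ↦ ⟪F x, w⟫ = fderiv L x w
    have hA : HasFDerivAt (fun x => fderiv ℝ L x w)
        ((innerSL ℝ w).comp H) θ := by
      have := ((innerSL ℝ w).hasFDerivAt (x := F θ)).comp θ hH
      refine this.congr_of_eventuallyEq (Eventually.of_forall fun x => ?_)
      simp only [Function.comp, innerSL_apply_apply]
      rw [← hFinner x w, real_inner_comm]
    have hB : HasFDerivAt (fun x => fderiv ℝ L x w)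
        ((ContinuousLinearMap.apply ℝ ℝ w).comp f'') θ :=
      ((ContinuousLinearMap.apply ℝ ℝ w).hasFDerivAt).comp θ hfd2.hasFDerivAt
    have := hA.unique hB
    have hv := congrArg (fun (T : E →L[ℝ] ℝ) => T v) this
    simp only [ContinuousLinearMap.comp_apply, innerSL_apply_apply,
      ContinuousLinearMap.apply_apply] at hv
    rw [real_inner_comm] at hv
    exact hv
  have hsymm2 : IsSymmSndFDerivAt ℝ L θ := hL.contDiffAt.isSymmSndFDerivAt (by simp)
  have hsymm : ∀ v w, ⟪H v, w⟫_ℝ = ⟪H w, v⟫_ℝ := by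
    intro v w
    rw [hinner, hinner, hsymm2 v w]
  -- gradient of g
  have hgrad : gradient g θ = (2:ℝ) • H (F θ) := by
    have hgin : HasFDerivAt (fun x => ⟪F x, F x⟫_ℝ)
        ((fderivInnerCLM ℝ (F θ, F θ)).comp <| H.prod H) θ := hH.inner ℝ hH
    have hgeq : g = fun x => ⟪F x, F x⟫_ℝ := by
      funext x
      rw [hg x]
      exact (real_inner_self_eq_norm_sq _).symm
    have hD : ((fderivInnerCLM ℝ (F θ, F θ)).comp <| H.prod H) = e ((2:ℝ) • H (F θ)) := by
      ext w
      simp only [ContinuousLinearMap.comp_apply, ContinuousLinearMap.prod_apply,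
        fderivInnerCLM_apply, he, InnerProductSpace.toDual_apply_apply]
      rw [real_inner_smul_left]
      have h1 : ⟪F θ, H w⟫_ℝ = ⟪H (F θ), w⟫_ℝ := by
        rw [real_inner_comm]; exact hsymm w (F θ)
      rw [h1, hsymm w (F θ)]; ring
    have : HasGradientAt g ((2:ℝ) • H (F θ)) θ := by
      rw [hasGradientAt_iff_hasFDerivAt, hgeq, ← he, ← hD]
      exact hgin
    exact this.gradient
  -- the curve and its first-order expansion
  have hc : HasDerivAt (fun η : ℝ => θ - η • F θ) (-(F θ)) 0 := by
    have h1 : HasDerivAt (fun η : ℝ => η • F θ) (F θ) 0 := by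
      simpa using (hasDerivAt_id (0 : ℝ)).smul_const (F θ)
    simpa using h1.const_sub θ
  have hθ0 : HasFDerivAt F H ((fun η : ℝ => θ - η • F θ) 0) := by simpa using hH
  have hu : HasDerivAt (fun η : ℝ => F (θ - η • F θ)) (-(H (F θ))) 0 := by
    have := hθ0.comp_hasDerivAt (0 : ℝ) hc
    simpa [Function.comp_def] using this
  have hslope : Tendsto (fun η : ℝ => η⁻¹ • (F (θ - η • F θ) - F θ))
      (𝓝[≠] (0 : ℝ)) (𝓝 (-(H (F θ)))) := by
    have := hasDerivAt_iff_tendsto_slope.1 hu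
    refine this.congr fun η => ?_
    simp [slope_fun_def, vsub_eq_sub]
  have hmain : Tendsto (fun η : ℝ => η⁻¹ • (F (θ - η • F θ) - F θ) + H (F θ))
      (𝓝[≠] (0 : ℝ)) (𝓝 (0 : E)) := by
    have := hslope.add_const (H (F θ))
    simpa using this
  have hsub : 𝓝[>] (0 : ℝ) ≤ 𝓝[≠] (0 : ℝ) :=
    nhdsWithin_mono _ fun x hx => ne_of_gt hx
  refine ((hmain.mono_left hsub).congr' ?_)
  filter_upwards [self_mem_nhdsWithin] with η (hη : 0 < η)
  have hηne : η ≠ 0 := ne_of_gt hη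
  have key : G η θ - θ + (η ^ 2 / 2) • gradient g θ
      = η • (F (θ - η • F θ) - F θ) + (η ^ 2) • H (F θ) := by
    rw [hG, hgrad, smul_smul, (by ring : η ^ 2 / 2 * 2 = η ^ 2)]
    module
  rw [key, smul_add, smul_smul, smul_smul,
    (by rw [pow_two, mul_inv, mul_assoc, inv_mul_cancel₀ hηne, mul_one] :
      (η ^ 2)⁻¹ * η = η⁻¹),
    inv_mul_cancel₀ (pow_ne_zero 2 hηne), one_smul]
end

section
/- Let E be a finite-dimensional real inner product space and let L : E → ℝ be twice differentiable with the derivative of ∇L (the Hessian map θ ↦ ∇²L(θ)) Lipschitz continuous with constant K ≥ 0 in the operator norm. For η > 0 and θ ∈ E, define the alternative training step G(η, θ) = θ' + η ∇L(θ') with θ' = θ − η ∇L(θ), and let g(θ) = ‖∇L(θ)‖². Then for all η > 0 and all θ ∈ E, the deviation of the alternating step from an exact gradient step on g is bounded by ‖G(η, θ) − (θ − (η²/2) ∇g(θ))‖ ≤ (K/2) η³ ‖∇L(θ)‖². -/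
open InnerProductSpace

/-- Quadratic Taylor bound for a function with Lipschitz derivative. -/
theorem taylor_quad_aux {E F : Type*} [NormedAddCommGroup E] [NormedSpace ℝ E]
    [NormedAddCommGroup F] [NormedSpace ℝ F]
    (f : E → F) (hf : Differentiable ℝ f) (K : ℝ)
    (hLip : ∀ x y, ‖fderiv ℝ f x - fderiv ℝ f y‖ ≤ K * ‖x - y‖)
    (x v : E) :
    ‖f (x + v) - f x - fderiv ℝ f x v‖ ≤ K / 2 * ‖v‖ ^ 2 := by
  set φ : ℝ → F := fun t => f (x + t • v) - f x - t • fderiv ℝ f x v with hφ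
  have hd : ∀ t : ℝ, HasDerivAt φ (fderiv ℝ f (x + t • v) v - fderiv ℝ f x v) t := by
    intro t
    have h1 : HasDerivAt (fun t : ℝ => x + t • v) v t := by
      simpa using ((hasDerivAt_id t).smul_const v).const_add x
    have h2 : HasDerivAt (fun t : ℝ => f (x + t • v)) (fderiv ℝ f (x + t • v) v) t :=
      (hf _).hasFDerivAt.comp_hasDerivAt t h1
    have h3 := (h2.sub_const (f x)).sub ((hasDerivAt_id t).smul_const (fderiv ℝ f x v))
    simp only [one_smul] at h3
    exact h3
  have key : ∀ t ∈ Set.Icc (0 : ℝ) 1, ‖φ t‖ ≤ K / 2 * ‖v‖ ^ 2 * t ^ 2 := by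
    refine image_norm_le_of_norm_deriv_right_le_deriv_boundary
      (f' := fun t => fderiv ℝ f (x + t • v) v - fderiv ℝ f x v)
      (B := fun t => K / 2 * ‖v‖ ^ 2 * t ^ 2)
      (B' := fun t => K * ‖v‖ ^ 2 * t) ?_ ?_ ?_ ?_ ?_
    · exact fun t _ => (hd t).continuousAt.continuousWithinAt
    · exact fun t _ => (hd t).hasDerivWithinAt
    · simp [hφ]
    · intro t
      have h := (hasDerivAt_pow 2 t).const_mul (K / 2 * ‖v‖ ^ 2)
      refine h.congr_deriv ?_
      norm_num
      try ring
    · intro t ht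
      have h1 : ‖fderiv ℝ f (x + t • v) v - fderiv ℝ f x v‖
          ≤ ‖fderiv ℝ f (x + t • v) - fderiv ℝ f x‖ * ‖v‖ := by
        simpa using (fderiv ℝ f (x + t • v) - fderiv ℝ f x).le_opNorm v
      have h2 : ‖fderiv ℝ f (x + t • v) - fderiv ℝ f x‖ ≤ K * (t * ‖v‖) := by
        have := hLip (x + t • v) x
        simpa [norm_smul, abs_of_nonneg ht.1] using this
      calc ‖fderiv ℝ f (x + t • v) v - fderiv ℝ f x v‖
          ≤ K * (t * ‖v‖) * ‖v‖ :=
            h1.trans (mul_le_mul_of_nonneg_right h2 (norm_nonneg v))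
        _ = K * ‖v‖ ^ 2 * t := by ring
  have h1 := key 1 (by norm_num)
  have hφ1 : φ 1 = f (x + v) - f x - fderiv ℝ f x v := by simp [hφ]
  rw [hφ1] at h1
  simpa using h1

/-- If `L` is twice differentiable with `K`-Lipschitz Hessian (in operator
norm), then the alternating descent–ascent step `G η θ` deviates from the
exact gradient step `θ - (η²/2) ∇g(θ)` on `g = ‖∇L‖²` by at most
`(K/2) η³ ‖∇L(θ)‖²`. -/
theorem alterSGD_step_dist_to_gradient_step_le
    {E : Type*} [NormedAddCommGroup E] [InnerProductSpace ℝ E]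
    [FiniteDimensional ℝ E]
    (L : E → ℝ)
    (hL : Differentiable ℝ L)
    (hL' : Differentiable ℝ (gradient L))
    (K : ℝ) (hK : 0 ≤ K)
    (hLip : ∀ x y : E,
      ‖fderiv ℝ (gradient L) x - fderiv ℝ (gradient L) y‖ ≤ K * ‖x - y‖)
    (G : ℝ → E → E)
    (hG : ∀ η θ, G η θ =
      (θ - η • gradient L θ) + η • gradient L (θ - η • gradient L θ))
    (g : E → ℝ) (hg : ∀ θ, g θ = ‖gradient L θ‖ ^ 2) :
    ∀ η : ℝ, 0 < η → ∀ θ : E,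
      ‖G η θ - (θ - (η ^ 2 / 2) • gradient g θ)‖ ≤
        (K / 2) * η ^ 3 * ‖gradient L θ‖ ^ 2 := by
  intro η hη θ
  set u := gradient L θ with hu
  set H := fderiv ℝ (gradient L) θ with hH
  -- the derivative of L, written through the gradient
  have hdual : (fun y => fderiv ℝ L y) = fun y => toDual ℝ E (gradient L y) := by
    funext y
    rw [gradient, (toDual ℝ E).apply_symm_apply]
  have hfd' : Differentiable ℝ (fun y => fderiv ℝ L y) := by
    rw [hdual]
    exact (toDual ℝ E).toContinuousLinearEquiv.differentiable.comp hL'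
  have hfdL : ∀ (y : E) (w : E), fderiv ℝ L y w = ⟪gradient L y, w⟫_ℝ := by
    intro y w
    rw [gradient, toDual_symm_apply]
  -- the second derivative of L evaluated through the Hessian H
  have hEval : ∀ v w : E, (fderiv ℝ (fun y => fderiv ℝ L y) θ) v w = ⟪H v, w⟫_ℝ := by
    intro v w
    have h1 : HasFDerivAt (fun y => fderiv ℝ L y w)
        ((ContinuousLinearMap.apply ℝ ℝ w).comp (fderiv ℝ (fun y => fderiv ℝ L y) θ)) θ :=
      (ContinuousLinearMap.apply ℝ ℝ w).hasFDerivAt.comp θ (hfd' θ).hasFDerivAt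
    have h2 : HasFDerivAt (fun y => fderiv ℝ L y w)
        ((fderivInnerCLM ℝ (u, w)).comp
          ((fderiv ℝ (gradient L) θ).prod (0 : E →L[ℝ] E))) θ := by
      have hfun : (fun y => fderiv ℝ L y w) = fun y => ⟪gradient L y, w⟫_ℝ := by
        funext y; exact hfdL y w
      rw [hfun]
      exact HasFDerivAt.inner ℝ (hL' θ).hasFDerivAt (hasFDerivAt_const w θ)
    have huniq := h1.unique h2
    have hv := ContinuousLinearMap.ext_iff.1 huniq v
    simp only [ContinuousLinearMap.comp_apply, ContinuousLinearMap.apply_apply,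
      ContinuousLinearMap.prod_apply, fderivInnerCLM_apply,
      ContinuousLinearMap.zero_apply, inner_zero_right] at hv
    rw [hv, ← hH]
    simp
  have hsymm : ∀ v w : E, ⟪H v, w⟫_ℝ = ⟪H w, v⟫_ℝ := by
    intro v w
    rw [← hEval v w, ← hEval w v]
    exact second_derivative_symmetric (fun y => (hL y).hasFDerivAt) (hfd' θ).hasFDerivAt v w
  -- gradient of g
  have hgradg : gradient g θ = (2 : ℝ) • H u := by
    have hinner : HasFDerivAt (fun y => ⟪gradient L y, gradient L y⟫_ℝ)
        ((fderivInnerCLM ℝ (u, u)).comp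
          ((fderiv ℝ (gradient L) θ).prod (fderiv ℝ (gradient L) θ))) θ :=
      HasFDerivAt.inner ℝ (hL' θ).hasFDerivAt (hL' θ).hasFDerivAt
    have heq : (fderivInnerCLM ℝ (u, u)).comp
        ((fderiv ℝ (gradient L) θ).prod (fderiv ℝ (gradient L) θ))
        = toDual ℝ E ((2 : ℝ) • H u) := by
      ext v
      simp only [ContinuousLinearMap.comp_apply, ContinuousLinearMap.prod_apply,
        fderivInnerCLM_apply, toDual_apply_apply, inner_smul_left, ← hH,
        starRingEnd_apply, star_trivial]
      have key : ⟪u, H v⟫_ℝ = ⟪H u, v⟫_ℝ := by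
        rw [real_inner_comm]; exact hsymm v u
      rw [key, hsymm v u]
      ring
    have hgg : HasGradientAt g ((2 : ℝ) • H u) θ := by
      rw [hasGradientAt_iff_hasFDerivAt, ← heq]
      have hfun : g = fun y => ⟪gradient L y, gradient L y⟫_ℝ := by
        funext y; rw [hg y, real_inner_self_eq_norm_sq]
      rw [hfun]
      exact hinner
    exact hgg.gradient
  -- rewrite the difference as the Taylor remainder
  have hθ' : θ - η • u = θ + (-η) • u := by rw [neg_smul, ← sub_eq_add_neg]
  have hdiff : G η θ - (θ - (η ^ 2 / 2) • gradient g θ)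
      = η • (gradient L (θ + (-η) • u) - gradient L θ - H ((-η) • u)) := by
    rw [hG, hgradg, map_smul, hθ']
    module
  rw [hdiff]
  have htay := taylor_quad_aux (gradient L) hL' K hLip θ ((-η) • u)
  rw [← hH] at htay
  have hnorm : ‖(-η : ℝ) • u‖ ^ 2 = η ^ 2 * ‖u‖ ^ 2 := by
    rw [norm_smul, Real.norm_eq_abs, abs_neg, abs_of_pos hη, mul_pow]
  rw [hnorm] at htay
  calc ‖η • (gradient L (θ + (-η) • u) - gradient L θ - H ((-η) • u))‖
      = η * ‖gradient L (θ + (-η) • u) - gradient L θ - H ((-η) • u)‖ := by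
        rw [norm_smul, Real.norm_eq_abs, abs_of_pos hη]
    _ ≤ η * (K / 2 * (η ^ 2 * ‖u‖ ^ 2)) := mul_le_mul_of_nonneg_left htay hη.le
    _ = K / 2 * η ^ 3 * ‖u‖ ^ 2 := by ring
end

section
/- Let E be a finite-dimensional real inner product space and let L : E → ℝ be twice continuously differentiable, and define g(θ) = ‖∇L(θ)‖² and the alternating step G(η, θ) = θ' + η ∇L(θ') with θ' = θ − η ∇L(θ). Fix θ ∈ E with ∇²L(θ)(∇L(θ)) ≠ 0 (equivalently ∇g(θ) ≠ 0). Then there exists η₀ > 0 such that for all η with 0 < η < η₀, one has g(G(η, θ)) < g(θ); that is, for sufficiently small learning rates, one alternating descent–ascent step strictly decreases the squared gradient norm ‖∇L‖², driving the iterates toward flatter regions of the loss landscape. -/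
open Filter Topology Asymptotics InnerProductSpace

set_option maxHeartbeats 1000000 in
/-- If `∇²L(θ)(∇L(θ)) ≠ 0`, then for all sufficiently small learning rates
`η > 0`, one alternating descent–ascent step strictly decreases the squared
gradient norm `g = ‖∇L‖²`. -/
theorem alterSGD_step_decreases_sq_grad_norm
    {E : Type*} [NormedAddCommGroup E] [InnerProductSpace ℝ E]
    [FiniteDimensional ℝ E]
    (L : E → ℝ) (hL : ContDiff ℝ 2 L)
    (g : E → ℝ) (hg : ∀ θ, g θ = ‖gradient L θ‖ ^ 2)
    (G : ℝ → E → E)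
    (hG : ∀ η θ, G η θ =
      (θ - η • gradient L θ) + η • gradient L (θ - η • gradient L θ))
    (θ : E)
    (hθ : (fderiv ℝ (gradient L) θ) (gradient L θ) ≠ 0) :
    ∃ η₀ : ℝ, 0 < η₀ ∧ ∀ η : ℝ, 0 < η → η < η₀ → g (G η θ) < g θ := by
  classical
  set f : E → E := gradient L with hfdef
  set v : E := f θ with hvdef
  set A : E →L[ℝ] E := fderiv ℝ f θ with hAdef
  set w : E := A v with hwdef
  have hw : w ≠ 0 := hθ
  -- the dual isometry as a genuine ℝ-continuous-linear map
  have hsmul : ∀ (c : ℝ) (y : E →L[ℝ] ℝ),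
      (toDual ℝ E).symm (c • y) = c • (toDual ℝ E).symm y := by
    intro c y
    have := map_smulₛₗ (toDual ℝ E).symm c y
    simpa [starRingEnd_apply] using this
  set T : (E →L[ℝ] ℝ) →L[ℝ] E := LinearMap.toContinuousLinearMap
    { toFun := fun y => (toDual ℝ E).symm y
      map_add' := fun x y => map_add _ x y
      map_smul' := fun c y => hsmul c y } with hTdef
  have hTf : ∀ y, T y = (toDual ℝ E).symm y := fun _ => rfl
  have hfT : f = fun x => T (fderiv ℝ L x) := rfl
  have hLd : Differentiable ℝ L := hL.differentiable two_ne_zero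
  have hF1 : ContDiff ℝ 1 (fderiv ℝ L) := hL.fderiv_right (by norm_num)
  have hFd : DifferentiableAt ℝ (fderiv ℝ L) θ := (hF1.differentiable one_ne_zero) θ
  have hfA' : HasFDerivAt f (T.comp (fderiv ℝ (fderiv ℝ L) θ)) θ := by
    rw [hfT]
    exact (T.hasFDerivAt.comp θ hFd.hasFDerivAt :)
  have hAeq : A = T.comp (fderiv ℝ (fderiv ℝ L) θ) := by
    rw [hAdef]; exact hfA'.fderiv
  have hfA : HasFDerivAt f A θ := by rw [hAeq]; exact hfA'
  -- symmetry of the second derivative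
  have hsecond := second_derivative_symmetric (f := L) (f' := fderiv ℝ L)
    (f'' := fderiv ℝ (fderiv ℝ L) θ) (fun y => (hLd y).hasFDerivAt) hFd.hasFDerivAt
  have h1 : ∀ u z : E, ⟪A u, z⟫_ℝ = (fderiv ℝ (fderiv ℝ L) θ u) z := by
    intro u z
    rw [hAeq]
    show ⟪T (fderiv ℝ (fderiv ℝ L) θ u), z⟫_ℝ = _
    rw [hTf]
    exact toDual_symm_apply
  have hsymm : ∀ u z : E, ⟪A u, z⟫_ℝ = ⟪A z, u⟫_ℝ := by
    intro u z
    rw [h1 u z, h1 z u, hsecond u z]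
  have hvAw : ⟪v, A w⟫_ℝ = ‖w‖ ^ 2 := by
    rw [real_inner_comm, hsymm w v, ← hwdef, real_inner_self_eq_norm_sq]
  -- the curve k η = ∇L(θ - η v)
  set k : ℝ → E := fun η => f (θ - η • v) with hkdef
  have hk0 : k 0 = v := by simp [hkdef, hvdef]
  have hc : HasDerivAt (fun η : ℝ => θ - η • v) (-v) 0 := by
    simpa using ((hasDerivAt_id (0:ℝ)).smul_const v).const_sub θ
  have hk : HasDerivAt k (-w) 0 := by
    have hfA0 : HasFDerivAt f A (θ - (0:ℝ) • v) := by simpa using hfA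
    have h := hfA0.comp_hasDerivAt 0 hc
    rw [hwdef, ← map_neg]; exact h
  set l : Filter ℝ := 𝓝[>] (0:ℝ) with hldef
  have hl_ne : l ≤ 𝓝[≠] (0:ℝ) := nhdsWithin_mono 0 (fun x hx => ne_of_gt hx)
  have hl0 : l ≤ 𝓝 (0:ℝ) := nhdsWithin_le_nhds
  have hl_pos : ∀ᶠ η in l, (0:ℝ) < η := eventually_mem_nhdsWithin
  -- slope limit: η⁻¹ • (k η - v) → -w
  have ha : Tendsto (fun η : ℝ => η⁻¹ • (k η - v)) l (𝓝 (-w)) := by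
    have := (hasDerivAt_iff_tendsto_slope.mp hk).mono_left hl_ne
    refine this.congr (fun η => ?_)
    rw [slope_def_module, hk0, sub_zero]
  -- ψ η = G η θ
  set ψ : ℝ → E := fun η => G η θ with hψdef
  have hψ : ∀ η, ψ η - θ = η • (k η - v) := by
    intro η
    rw [hψdef]; simp only [hG, hkdef, ← hvdef, ← hfdef, smul_sub]
    abel
  have hb : Tendsto (fun η : ℝ => (η^2)⁻¹ • (ψ η - θ)) l (𝓝 (-w)) := by
    refine ha.congr' ?_
    filter_upwards [hl_pos] with η hη
    rw [hψ η, smul_smul, sq, mul_inv, mul_assoc, inv_mul_cancel₀ (ne_of_gt hη), mul_one]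
  have hkv : Tendsto k l (𝓝 v) := by
    have := hk.continuousAt.tendsto.mono_left hl0
    rwa [hk0] at this
  have hψθ : Tendsto ψ l (𝓝 θ) := by
    have hid : Tendsto (fun η : ℝ => η) l (𝓝 0) := tendsto_id'.mpr hl0
    have h1 : Tendsto (fun η : ℝ => θ + η • (k η - v)) l (𝓝 (θ + (0:ℝ) • (v - v))) :=
      tendsto_const_nhds.add (hid.smul (hkv.sub tendsto_const_nhds))
    simp only [sub_self, smul_zero, add_zero] at h1
    refine h1.congr (fun η => ?_)
    rw [← hψ η]; abel
  -- little-o: e η = f(ψ η) - v - A(ψ η - θ) = o(η²)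
  have hA_littleo : (fun x => f x - v - A (x - θ)) =o[𝓝 θ] fun x => x - θ := hfA.isLittleO
  have he : (fun η => f (ψ η) - v - A (ψ η - θ)) =o[l] fun η => ψ η - θ :=
    hA_littleo.comp_tendsto hψθ
  have hO : (fun η => ψ η - θ) =O[l] fun η => η ^ 2 := by
    rw [isBigO_iff]
    refine ⟨‖w‖ + 1, ?_⟩
    have hbd : ∀ᶠ η in l, ‖(η^2)⁻¹ • (ψ η - θ)‖ < ‖w‖ + 1 := by
      refine hb.norm.eventually_lt_const ?_
      rw [norm_neg]; linarith
    filter_upwards [hbd, hl_pos] with η h1 h2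
    have hη2 : (0:ℝ) < η ^ 2 := by positivity
    have hns : ‖ψ η - θ‖ = η ^ 2 * ‖(η^2)⁻¹ • (ψ η - θ)‖ := by
      rw [norm_smul, norm_inv, Real.norm_of_nonneg hη2.le, ← mul_assoc,
        mul_inv_cancel₀ hη2.ne', one_mul]
    rw [hns, Real.norm_of_nonneg hη2.le, mul_comm]
    exact mul_le_mul_of_nonneg_right h1.le hη2.le
  have he2 : (fun η => f (ψ η) - v - A (ψ η - θ)) =o[l] fun η => η ^ 2 :=
    he.trans_isBigO hO
  have hetend : Tendsto (fun η : ℝ => (η^2)⁻¹ • (f (ψ η) - v - A (ψ η - θ))) l (𝓝 0) := by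
    rw [tendsto_zero_iff_norm_tendsto_zero]
    have h := he2.norm_norm.tendsto_div_nhds_zero
    refine Tendsto.congr' ?_ h
    filter_upwards [hl_pos] with η hη
    have hη2 : (0:ℝ) < η ^ 2 := by positivity
    rw [norm_smul, norm_inv, div_eq_inv_mul]
  -- c η := (η²)⁻¹ • (f(ψ η) - v) → -(A w)
  have hcc : Tendsto (fun η : ℝ => (η^2)⁻¹ • (f (ψ η) - v)) l (𝓝 (-(A w))) := by
    have hAb : Tendsto (fun η : ℝ => A ((η^2)⁻¹ • (ψ η - θ))) l (𝓝 (A (-w))) :=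
      (A.continuous.tendsto _).comp hb
    have hsum := hetend.add hAb
    rw [zero_add, map_neg] at hsum
    refine hsum.congr fun η => ?_
    rw [map_smul]
    module
  -- the quotient limit
  have hq : Tendsto (fun η : ℝ => (g (G η θ) - g θ) / η ^ 2) l (𝓝 (-2 * ‖w‖ ^ 2)) := by
    have hlim1 : Tendsto (fun η : ℝ => 2 * ⟪v, (η^2)⁻¹ • (f (ψ η) - v)⟫_ℝ) l
        (𝓝 (2 * ⟪v, -(A w)⟫_ℝ)) :=
      (tendsto_const_nhds.inner hcc).const_mul 2
    have hid : Tendsto (fun η : ℝ => η) l (𝓝 0) := tendsto_id'.mpr hl0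
    have hsq : Tendsto (fun η : ℝ => η ^ 2) l (𝓝 0) := by
      simpa using hid.pow 2
    have hlim2 : Tendsto (fun η : ℝ => η^2 * ‖(η^2)⁻¹ • (f (ψ η) - v)‖ ^ 2) l
        (𝓝 (0 * ‖-(A w)‖ ^ 2)) := hsq.mul (hcc.norm.pow 2)
    have hlim := hlim1.add hlim2
    rw [inner_neg_right, hvAw] at hlim
    have hval : 2 * -(‖w‖ ^ 2 : ℝ) + 0 * ‖-(A w)‖ ^ 2 = -2 * ‖w‖ ^ 2 := by ring
    rw [hval] at hlim
    refine Tendsto.congr' ?_ hlim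
    filter_upwards [hl_pos] with η hη
    have hη2 : (0:ℝ) < η ^ 2 := by positivity
    have hgG : g (G η θ) = ‖v‖^2 + 2 * ⟪v, f (ψ η) - v⟫_ℝ + ‖f (ψ η) - v‖^2 := by
      rw [hg]
      have hfv : f (G η θ) = v + (f (ψ η) - v) := by
        rw [hψdef, add_sub_cancel]
      rw [hfv, norm_add_sq_real, add_sub_cancel_left]
    have hgθ : g θ = ‖v‖ ^ 2 := hg θ
    have key : ∀ p q : ℝ, 2 * ((η^2)⁻¹ * p) + η^2 * ((η^2)⁻¹ * q)^2 =
        (‖v‖^2 + 2*p + q^2 - ‖v‖^2)/η^2 := by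
      intro p q; field_simp; ring
    rw [hgG, hgθ, real_inner_smul_right, norm_smul, norm_inv,
      Real.norm_of_nonneg hη2.le]
    exact key _ _
  -- conclude
  have hneg : ∀ᶠ η in l, (g (G η θ) - g θ) / η ^ 2 < 0 := by
    refine hq.eventually_lt_const ?_
    have hpos : (0:ℝ) < ‖w‖ ^ 2 := pow_pos (norm_pos_iff.mpr hw) 2
    nlinarith
  rcases mem_nhdsGT_iff_exists_Ioo_subset.mp hneg with ⟨η₀, hη₀, hsub⟩
  refine ⟨η₀, hη₀, fun η h1 h2 => ?_⟩
  have hlt : (g (G η θ) - g θ) / η ^ 2 < 0 := hsub ⟨h1, h2⟩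
  have hη2 : (0:ℝ) < η ^ 2 := by positivity
  rcases div_neg_iff.mp hlt with ⟨_, hd⟩ | ⟨hn, _⟩
  · linarith
  · linarith
end
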